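/- Let α > 0, let l ≥ 1 be an integer with 2αl+2l−2 > 0, and define h : (0,∞) → ℝ by h(λ) = −λ^{4α+2−2/l} + λ^{2α+2−2/l} − η, where 0 < η < 2αl·(2αl+2l−2)^{1+1/α−1/(αl)} / (4αl+2l−2)^{2+1/α−1/(αl)}. Set λ* = ((2αl+2l−2)/(4αl+2l−2))^{1/(2α)}. Then there exist λ⁻ ∈ (0, λ*) and λ⁺ ∈ (λ*, 1) such that h(λ) < 0 for λ ∈ (0, λ⁻), h(λ) > 0 for λ ∈ (λ⁻, λ⁺), h(λ⁻) = h(λ⁺) = 0, and h(λ) < 0 for λ ∈ (λ⁺, ∞). -/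

import Mathlib

lemma deep_aux_deriv (p a η : ℝ) {x : ℝ} (hx : 0 < x) :
    HasDerivAt (fun x : ℝ => -x ^ (p + a) + x ^ p - η)
      (x ^ (p - 1) * (p - (p + a) * x ^ a)) x := by
  have h1 : HasDerivAt (fun x : ℝ => x ^ (p + a)) ((p + a) * x ^ (p + a - 1)) x :=
    Real.hasDerivAt_rpow_const (Or.inl hx.ne')
  have h2 : HasDerivAt (fun x : ℝ => x ^ p) (p * x ^ (p - 1)) x :=
    Real.hasDerivAt_rpow_const (Or.inl hx.ne')
  have h3 := (h1.neg.add h2).sub_const η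
  refine h3.congr_deriv ?_
  have : x ^ (p + a - 1) = x ^ (p - 1) * x ^ a := by
    rw [← Real.rpow_add hx]; ring_nf
  rw [this]; ring

lemma deep_aux_sign (p a η : ℝ) (hp : 0 < p) (ha : 0 < a) (hη : 0 < η)
    (hη2 : η < (p / (p + a)) ^ (p / a) * (a / (p + a))) :
    ∃ lm lp : ℝ, lm ∈ Set.Ioo 0 ((p / (p + a)) ^ (1 / a)) ∧
      lp ∈ Set.Ioo ((p / (p + a)) ^ (1 / a)) 1 ∧
      (∀ x ∈ Set.Ioo (0:ℝ) lm, -x ^ (p + a) + x ^ p - η < 0) ∧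
      (∀ x ∈ Set.Ioo lm lp, 0 < -x ^ (p + a) + x ^ p - η) ∧
      (-lm ^ (p + a) + lm ^ p - η = 0) ∧ (-lp ^ (p + a) + lp ^ p - η = 0) ∧
      (∀ x ∈ Set.Ioi lp, -x ^ (p + a) + x ^ p - η < 0) := by
  set f : ℝ → ℝ := fun x => -x ^ (p + a) + x ^ p - η with hf
  have hpa : 0 < p + a := by linarith
  set r : ℝ := p / (p + a) with hr
  have hr0 : 0 < r := div_pos hp hpa
  have hr1 : r < 1 := (div_lt_one hpa).mpr (by linarith)
  set ls : ℝ := r ^ (1 / a) with hls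
  have hls0 : 0 < ls := Real.rpow_pos_of_pos hr0 _
  have hls1 : ls < 1 := Real.rpow_lt_one hr0.le hr1 (by positivity)
  have hlsa : ls ^ a = r := by
    rw [hls, ← Real.rpow_mul hr0.le, one_div, inv_mul_cancel₀ ha.ne', Real.rpow_one]
  -- value at ls
  have hfls : 0 < f ls := by
    have h1 : ls ^ p = r ^ (p / a) := by
      rw [hls, ← Real.rpow_mul hr0.le]; ring_nf
    have h2 : ls ^ (p + a) = r ^ (p / a) * r := by
      rw [hls, ← Real.rpow_mul hr0.le]
      rw [show 1 / a * (p + a) = p / a + 1 by field_simp]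
      rw [Real.rpow_add hr0, Real.rpow_one]
    have h3 : (1 : ℝ) - r = a / (p + a) := by
      rw [hr]; field_simp; ring
    have : f ls = r ^ (p / a) * (a / (p + a)) - η := by
      rw [hf]; simp only [h1, h2, ← h3]; ring
    rw [this]; linarith
  -- monotonicity
  have hcont : ∀ s : Set ℝ, s ⊆ Set.Ioi 0 → ContinuousOn f s := by
    intro s hs
    apply ContinuousOn.sub _ continuousOn_const
    apply ContinuousOn.add
    · exact (continuousOn_id.rpow_const (fun x hx => Or.inl (ne_of_gt (hs hx)))).neg
    · exact continuousOn_id.rpow_const (fun x hx => Or.inl (ne_of_gt (hs hx)))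
  have hmono : StrictMonoOn f (Set.Ioc 0 ls) := by
    apply strictMonoOn_of_deriv_pos (convex_Ioc 0 ls)
      (hcont _ (fun x hx => hx.1))
    intro x hx
    rw [interior_Ioc] at hx
    rw [(deep_aux_deriv p a η hx.1).deriv]
    have hxa : x ^ a < r := by
      calc x ^ a < ls ^ a := Real.rpow_lt_rpow hx.1.le hx.2 ha
        _ = r := hlsa
    have : (p + a) * x ^ a < p := by
      have := (mul_lt_mul_iff_right₀ hpa).mpr hxa
      rwa [hr, mul_div_cancel₀ _ hpa.ne'] at this
    have hx1 : (0:ℝ) < x ^ (p - 1) := Real.rpow_pos_of_pos hx.1 _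
    nlinarith
  have hanti : StrictAntiOn f (Set.Ici ls) := by
    apply strictAntiOn_of_deriv_neg (convex_Ici ls)
      (hcont _ (fun x hx => lt_of_lt_of_le hls0 hx))
    intro x hx
    rw [interior_Ici] at hx
    have hx0 : 0 < x := lt_trans hls0 hx
    rw [(deep_aux_deriv p a η hx0).deriv]
    have hxa : r < x ^ a := by
      calc r = ls ^ a := hlsa.symm
        _ < x ^ a := Real.rpow_lt_rpow hls0.le hx ha
    have : p < (p + a) * x ^ a := by
      have := (mul_lt_mul_iff_right₀ hpa).mpr hxa
      rwa [hr, mul_div_cancel₀ _ hpa.ne'] at this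
    have hx1 : (0:ℝ) < x ^ (p - 1) := Real.rpow_pos_of_pos hx0 _
    nlinarith
  -- point near 0 with f < 0
  set ε : ℝ := min (ls / 2) (η ^ (1 / p)) with hε
  have hε0 : 0 < ε := lt_min (by linarith) (Real.rpow_pos_of_pos hη _)
  have hεls : ε < ls := lt_of_le_of_lt (min_le_left _ _) (by linarith)
  have hfε : f ε < 0 := by
    have h1 : ε ^ p ≤ η := by
      calc ε ^ p ≤ (η ^ (1 / p)) ^ p :=
            Real.rpow_le_rpow hε0.le (min_le_right _ _) hp.le
        _ = η := by
            rw [← Real.rpow_mul hη.le, one_div, inv_mul_cancel₀ hp.ne', Real.rpow_one]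
    have h2 : 0 < ε ^ (p + a) := Real.rpow_pos_of_pos hε0 _
    simp only [hf]; linarith
  -- λ⁻ via IVT
  obtain ⟨lm, hlm, hlm0⟩ : ∃ lm ∈ Set.Ioo ε ls, f lm = 0 := by
    have := intermediate_value_Ioo hεls.le
      (hcont _ (fun x hx => lt_of_lt_of_le hε0 hx.1))
    have h0 : (0:ℝ) ∈ Set.Ioo (f ε) (f ls) := ⟨hfε, hfls⟩
    obtain ⟨lm, hlm, hlm0⟩ := this h0
    exact ⟨lm, hlm, hlm0⟩
  -- λ⁺ via IVT
  have hf1 : f 1 < 0 := by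
    simp only [hf, Real.one_rpow]; linarith
  obtain ⟨lp, hlp, hlp0⟩ : ∃ lp ∈ Set.Ioo ls 1, f lp = 0 := by
    have := intermediate_value_Ioo' hls1.le
      (hcont _ (fun x hx => lt_of_lt_of_le hls0 hx.1))
    have h0 : (0:ℝ) ∈ Set.Ioo (f 1) (f ls) := ⟨hf1, hfls⟩
    obtain ⟨lp, hlp, hlp0⟩ := this h0
    exact ⟨lp, hlp, hlp0⟩
  have hlm0' : 0 < lm := lt_trans hε0 hlm.1
  refine ⟨lm, lp, ⟨hlm0', hlm.2⟩, hlp, ?_, ?_, hlm0, hlp0, ?_⟩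
  · intro x hx
    have : f x < f lm := hmono ⟨hx.1, le_of_lt (lt_trans hx.2 hlm.2)⟩
      ⟨hlm0', hlm.2.le⟩ hx.2
    rw [hlm0] at this; exact this
  · intro x hx
    rcases le_or_gt x ls with hxls | hxls
    · have : f lm < f x := hmono ⟨hlm0', hlm.2.le⟩ ⟨lt_trans hlm0' hx.1, hxls⟩ hx.1
      rw [hlm0] at this; exact this
    · have : f lp < f x := hanti hxls.le hlp.1.le hx.2
      rw [hlp0] at this; exact this
  · intro x hx
    have : f x < f lp := hanti hlp.1.le (le_trans hlp.1.le (le_of_lt hx)) hx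
    rw [hlp0] at this; exact this

/-- sign structure of
`h(λ) = −λ^{4α+2−2/l} + λ^{2α+2−2/l} − η` (deep linear network, invariant
subspace): with `2αl+2l−2 > 0` and
`0 < η < 2αl(2αl+2l−2)^{1+1/α−1/(αl)} / (4αl+2l−2)^{2+1/α−1/(αl)}`,
there are zeros `λ⁻ ∈ (0, λ*)` and `λ⁺ ∈ (λ*, 1)` with `h < 0` on `(0, λ⁻)`,
`h > 0` on `(λ⁻, λ⁺)` and `h < 0` on `(λ⁺, ∞)`. -/
theorem deep_linear_invariant_h_sign_structure
    (α η : ℝ) (l : ℕ) (hα : 0 < α) (hl : 1 ≤ l)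
    (hpos : 0 < 2 * α * (l : ℝ) + 2 * (l : ℝ) - 2)
    (hη1 : 0 < η)
    (hη2 : η <
      2 * α * (l : ℝ) *
          (2 * α * (l : ℝ) + 2 * (l : ℝ) - 2) ^
            (1 + 1 / α - 1 / (α * (l : ℝ))) /
        (4 * α * (l : ℝ) + 2 * (l : ℝ) - 2) ^
            (2 + 1 / α - 1 / (α * (l : ℝ)))) :
    let h : ℝ → ℝ := fun lam =>
      -lam ^ (4 * α + 2 - 2 / (l : ℝ)) + lam ^ (2 * α + 2 - 2 / (l : ℝ)) - η
    let lamstar : ℝ :=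
      ((2 * α * (l : ℝ) + 2 * (l : ℝ) - 2) /
        (4 * α * (l : ℝ) + 2 * (l : ℝ) - 2)) ^ (1 / (2 * α))
    ∃ lamMinus lamPlus : ℝ,
      lamMinus ∈ Set.Ioo 0 lamstar ∧ lamPlus ∈ Set.Ioo lamstar 1 ∧
      (∀ lam ∈ Set.Ioo (0 : ℝ) lamMinus, h lam < 0) ∧
      (∀ lam ∈ Set.Ioo lamMinus lamPlus, 0 < h lam) ∧
      h lamMinus = 0 ∧ h lamPlus = 0 ∧
      (∀ lam ∈ Set.Ioi lamPlus, h lam < 0) := by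
  intro h lamstar
  have hl0 : (0:ℝ) < (l:ℝ) := by exact_mod_cast Nat.lt_of_lt_of_le Nat.zero_lt_one hl
  set p : ℝ := 2 * α + 2 - 2 / (l:ℝ) with hpdef
  set a : ℝ := 2 * α with hadef
  have ha : 0 < a := by positivity
  have hp : 0 < p := by
    have : p * l = 2 * α * l + 2 * l - 2 := by
      rw [hpdef]; field_simp; ring
    nlinarith
  have hpa : 0 < p + a := by linarith
  have hA : 2 * α * (l:ℝ) + 2 * (l:ℝ) - 2 = (l:ℝ) * p := by
    rw [hpdef]; field_simp; ring
  have hB : 4 * α * (l:ℝ) + 2 * (l:ℝ) - 2 = (l:ℝ) * (p + a) := by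
    rw [hpdef, hadef]; field_simp; ring
  have hq : 1 + 1 / α - 1 / (α * (l:ℝ)) = p / a := by
    rw [hpdef, hadef]; field_simp
  have hq' : 2 + 1 / α - 1 / (α * (l:ℝ)) = p / a + 1 := by
    rw [hpdef, hadef]; field_simp; ring
  have hη2' : η < (p / (p + a)) ^ (p / a) * (a / (p + a)) := by
    have key : 2 * α * (l : ℝ) *
          (2 * α * (l : ℝ) + 2 * (l : ℝ) - 2) ^ (1 + 1 / α - 1 / (α * (l : ℝ))) /
        (4 * α * (l : ℝ) + 2 * (l : ℝ) - 2) ^ (2 + 1 / α - 1 / (α * (l : ℝ)))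
        = (p / (p + a)) ^ (p / a) * (a / (p + a)) := by
      rw [hA, hB, hq, hq']
      rw [Real.rpow_add (by positivity), Real.rpow_one]
      rw [Real.mul_rpow hl0.le hp.le, Real.mul_rpow hl0.le hpa.le]
      rw [Real.div_rpow hp.le hpa.le]
      have h1 : (0:ℝ) < (l:ℝ) ^ (p/a) := by positivity
      have h2 : (0:ℝ) < p ^ (p/a) := by positivity
      have h3 : (0:ℝ) < (p+a) ^ (p/a) := by positivity
      rw [hadef]
      field_simp
    rw [← key]; exact hη2
  have hlamstar : lamstar = (p / (p + a)) ^ (1 / a) := by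
    show ((2 * α * (l : ℝ) + 2 * (l : ℝ) - 2) /
        (4 * α * (l : ℝ) + 2 * (l : ℝ) - 2)) ^ (1 / (2 * α)) = _
    rw [hA, hB, mul_div_mul_left _ _ hl0.ne', hadef]
  have hexp : 4 * α + 2 - 2 / (l:ℝ) = p + a := by rw [hpdef, hadef]; ring
  have hh : ∀ x : ℝ, h x = -x ^ (p + a) + x ^ p - η := by
    intro x; simp only [h, hexp, hpdef, ← hadef]
  obtain ⟨lm, lp, h1, h2, h3, h4, h5, h6, h7⟩ := deep_aux_sign p a η hp ha hη1 hη2'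
  rw [hlamstar]
  refine ⟨lm, lp, h1, h2, ?_, ?_, ?_, ?_, ?_⟩
  · intro x hx; rw [hh]; exact h3 x hx
  · intro x hx; rw [hh]; exact h4 x hx
  · rw [hh]; exact h5
  · rw [hh]; exact h6
  · intro x hx; rw [hh]; exact h7 x hx
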